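/- Suppose a < q < b in [0,1] satisfy: ūB(y) > ūA(y) for all y ∈ (a, q); ūA(y) > ūB(y) for all y ∈ (q, b); either a = 0 and ūB(0) > ūA(0), or there is a₀ < a with ūA > ūB on (a₀, a); and either b = 1 and ūA(1) > ūB(1), or there is b₀ > b with ūB > ūA on (b, b₀). Then every solution z of the abstract imitation dynamics with z(0) = q converges, as t → ∞, to one of the three points a, q, b; moreover each of a, q, and b is the limit of some solution starting at q. In particular, the limit set of the point q equals {a, q, b}. -/

import Mathlib

open scoped Classical
open MeasureTheory Filter Set

/-- Maximum of finitely many polynomial utilities at `y`. -/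
noncomputable def ubar {p : ℕ} (u : Fin p → Polynomial ℝ) (y : ℝ) : ℝ :=
  ⨆ i, (u i).eval y

/-- The set-valued map of the abstract imitation dynamics. -/
noncomputable def Xset {p : ℕ} (uA uB : Fin p → Polynomial ℝ) (z : ℝ) : Set ℝ :=
  if ubar uB z < ubar uA z then {1 - z}
  else if ubar uA z < ubar uB z then {-z}
  else Set.Icc (-z) (1 - z)

/-- A (Carathéodory) solution of the abstract imitation dynamics on `[0,∞)`:
a locally absolutely continuous `[0,1]`-valued function whose derivative lies in
`Xset` almost everywhere, expressed in integral form. -/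
def IsAbsSol {p : ℕ} (uA uB : Fin p → Polynomial ℝ) (z : ℝ → ℝ) : Prop :=
  (∀ t, 0 ≤ t → z t ∈ Set.Icc (0:ℝ) 1) ∧
  ∃ v : ℝ → ℝ,
    (∀ᵐ t ∂(MeasureTheory.volume.restrict (Set.Ici (0:ℝ))), v t ∈ Xset uA uB (z t)) ∧
    (∀ t, 0 ≤ t → IntervalIntegrable v MeasureTheory.volume 0 t) ∧
    (∀ t, 0 ≤ t → z t = z 0 + ∫ s in (0:ℝ)..t, v s)

section Aux
variable {p : ℕ} {uA uB : Fin p → Polynomial ℝ}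

lemma Xset_left {y : ℝ} (h : ubar uA y < ubar uB y) : Xset uA uB y = {-y} := by
  rw [Xset, if_neg (lt_asymm h), if_pos h]

lemma Xset_right {y : ℝ} (h : ubar uB y < ubar uA y) : Xset uA uB y = {1 - y} := by
  rw [Xset, if_pos h]

lemma Xset_mid {y : ℝ} (h : ubar uA y = ubar uB y) : Xset uA uB y = Set.Icc (-y) (1 - y) := by
  rw [Xset, if_neg (by rw [h]; exact lt_irrefl _), if_neg (by rw [h]; exact lt_irrefl _)]

lemma ubar_continuous (hp : 0 < p) (u : Fin p → Polynomial ℝ) : Continuous (ubar u) := by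
  haveI : Nonempty (Fin p) := ⟨⟨0, hp⟩⟩
  have h : ubar u = fun y => Finset.univ.sup' Finset.univ_nonempty (fun i => (u i).eval y) := by
    funext y; rw [ubar, Finset.sup'_univ_eq_ciSup]
  rw [h, continuous_iff_continuousAt]
  intro y
  exact Filter.Tendsto.finset_sup'_nhds_apply _
    (fun i _ => ((u i).continuous).continuousAt)

lemma ubar_le_right (hp : 0 < p) (f g : Fin p → Polynomial ℝ) {c x : ℝ} (hcx : c < x)
    (h : ∀ y ∈ Set.Ioo c x, ubar f y ≤ ubar g y) : ubar f x ≤ ubar g x := by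
  have hcl : closure (Set.Ioo c x) ⊆ {y | ubar f y ≤ ubar g y} :=
    closure_minimal (fun y hy => h y hy)
      (isClosed_le (ubar_continuous hp f) (ubar_continuous hp g))
  exact hcl (by rw [closure_Ioo hcx.ne]; exact ⟨hcx.le, le_refl x⟩)

lemma ubar_le_left (hp : 0 < p) (f g : Fin p → Polynomial ℝ) {x d : ℝ} (hxd : x < d)
    (h : ∀ y ∈ Set.Ioo x d, ubar f y ≤ ubar g y) : ubar f x ≤ ubar g x := by
  have hcl : closure (Set.Ioo x d) ⊆ {y | ubar f y ≤ ubar g y} :=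
    closure_minimal (fun y hy => h y hy)
      (isClosed_le (ubar_continuous hp f) (ubar_continuous hp g))
  exact hcl (by rw [closure_Ioo hxd.ne]; exact ⟨le_refl x, hxd.le⟩)

end Aux

section Sol
variable {z v : ℝ → ℝ}

lemma sol_subint (hint : ∀ t, 0 ≤ t → IntervalIntegrable v MeasureTheory.volume 0 t)
    {s t : ℝ} (hs : 0 ≤ s) (hst : s ≤ t) :
    IntervalIntegrable v MeasureTheory.volume s t := by
  refine (hint t (hs.trans hst)).mono_set ?_
  rw [uIcc_of_le hst, uIcc_of_le (hs.trans hst)]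
  exact Set.Icc_subset_Icc hs le_rfl

lemma sol_diff (hint : ∀ t, 0 ≤ t → IntervalIntegrable v MeasureTheory.volume 0 t)
    (hrep : ∀ t, 0 ≤ t → z t = z 0 + ∫ s in (0:ℝ)..t, v s)
    {s t : ℝ} (hs : 0 ≤ s) (hst : s ≤ t) :
    z t - z s = ∫ u in s..t, v u := by
  have h1 := hrep s hs
  have h2 := hrep t (hs.trans hst)
  have h3 := intervalIntegral.integral_add_adjacent_intervals
    (hint s hs) (sol_subint hint hs hst)
  rw [h1, h2]; linarith

lemma sol_contOn (hint : ∀ t, 0 ≤ t → IntervalIntegrable v MeasureTheory.volume 0 t)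
    (hrep : ∀ t, 0 ≤ t → z t = z 0 + ∫ s in (0:ℝ)..t, v s)
    {T : ℝ} (hT : 0 ≤ T) : ContinuousOn z (Set.Icc 0 T) := by
  have hI : IntegrableOn v (uIcc (0:ℝ) T) MeasureTheory.volume := by
    rw [uIcc_of_le hT]
    exact (intervalIntegrable_iff_integrableOn_Icc_of_le hT).mp (hint T hT)
  have h1 : ContinuousOn (fun t => z 0 + ∫ s in (0:ℝ)..t, v s) (Set.Icc 0 T) := by
    have := intervalIntegral.continuousOn_primitive_interval hI
    rw [uIcc_of_le hT] at this
    exact continuousOn_const.add this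
  exact h1.congr (fun t ht => hrep t ht.1)

end Sol

section Barrier
variable {p : ℕ} {uA uB : Fin p → Polynomial ℝ} {z v : ℝ → ℝ}


/-- The solution cannot cross upward through a region where `ubar uA < ubar uB`. -/
lemma barrier_up {c d m m₂ t₀ t₁ : ℝ}
    (hz01 : ∀ t, 0 ≤ t → z t ∈ Set.Icc (0:ℝ) 1)
    (hXv : ∀ᵐ t ∂(MeasureTheory.volume.restrict (Set.Ici (0:ℝ))), v t ∈ Xset uA uB (z t))
    (hint : ∀ t, 0 ≤ t → IntervalIntegrable v MeasureTheory.volume 0 t)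
    (hrep : ∀ t, 0 ≤ t → z t = z 0 + ∫ s in (0:ℝ)..t, v s)
    (hcd : ∀ y ∈ Set.Ioo c d, ubar uA y < ubar uB y)
    (hm : c ≤ m) (hmm : m < m₂) (hm₂ : m₂ ≤ d)
    (ht₀ : 0 ≤ t₀) (ht : t₀ ≤ t₁) (h0 : z t₀ ≤ m) : z t₁ ≤ m₂ := by
  by_contra hcon
  push_neg at hcon
  have ht₁ : (0:ℝ) ≤ t₁ := ht₀.trans ht
  have hzc : ContinuousOn z (Set.Icc t₀ t₁) :=
    (sol_contOn hint hrep ht₁).mono (Set.Icc_subset_Icc ht₀ le_rfl)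
  -- the last time in [t₀,t₁] where z ≤ m
  set S : Set ℝ := Set.Icc t₀ t₁ ∩ z ⁻¹' Set.Iic m with hS
  have hScl : IsClosed S := hzc.preimage_isClosed_of_isClosed isClosed_Icc isClosed_Iic
  have hScpt : IsCompact S := isCompact_Icc.of_isClosed_subset hScl Set.inter_subset_left
  have hSne : S.Nonempty := ⟨t₀, ⟨le_rfl, ht⟩, h0⟩
  set s := sSup S with hs
  have hsS : s ∈ S := hScpt.sSup_mem hSne
  have hs0 : (0:ℝ) ≤ s := ht₀.trans hsS.1.1
  have hst₁ : s ≤ t₁ := hsS.1.2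
  -- the first time in [s,t₁] where z ≥ m₂
  have hzc' : ContinuousOn z (Set.Icc s t₁) :=
    hzc.mono (Set.Icc_subset_Icc hsS.1.1 le_rfl)
  set S' : Set ℝ := Set.Icc s t₁ ∩ z ⁻¹' Set.Ici m₂ with hS'
  have hS'cl : IsClosed S' := hzc'.preimage_isClosed_of_isClosed isClosed_Icc isClosed_Ici
  have hS'cpt : IsCompact S' := isCompact_Icc.of_isClosed_subset hS'cl Set.inter_subset_left
  have hS'ne : S'.Nonempty := ⟨t₁, ⟨hst₁, le_rfl⟩, hcon.le⟩
  set s' := sInf S' with hs'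
  have hs'S : s' ∈ S' := hS'cpt.sInf_mem hS'ne
  have hss' : s ≤ s' := hs'S.1.1
  -- in between, m < z t < m₂
  have key : ∀ t ∈ Set.Ioo s s', m < z t ∧ z t < m₂ := by
    intro t htm
    constructor
    · by_contra h
      push_neg at h
      have htS : t ∈ S := ⟨⟨hsS.1.1.trans htm.1.le, htm.2.le.trans hs'S.1.2⟩, h⟩
      exact absurd (le_csSup hScpt.bddAbove htS) (not_le.mpr htm.1)
    · by_contra h
      push_neg at h
      have htS' : t ∈ S' := ⟨⟨htm.1.le, htm.2.le.trans hs'S.1.2⟩, h⟩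
      exact absurd (csInf_le hS'cpt.bddBelow htS') (not_le.mpr htm.2)
  -- the velocity is ≤ 0 a.e. on [s, s']
  have hv_le : ∀ᵐ u ∂(MeasureTheory.volume.restrict (Set.Icc s s')), -v u ≥ 0 := by
    have h1 : ∀ᵐ u ∂(MeasureTheory.volume.restrict (Set.Icc s s')),
        v u ∈ Xset uA uB (z u) :=
      ae_restrict_of_ae_restrict_of_subset (fun x hx => hs0.trans hx.1) hXv
    have h2 : ∀ᵐ u ∂(MeasureTheory.volume.restrict (Set.Icc s s')), u ∈ Set.Icc s s' :=
      ae_restrict_mem measurableSet_Icc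
    have h3 : ∀ᵐ u ∂(MeasureTheory.volume.restrict (Set.Icc s s')), u ≠ s := by
      refine ae_restrict_of_ae ?_
      rw [ae_iff]
      simp only [ne_eq, not_not, setOf_eq_eq_singleton]
      exact measure_singleton s
    have h4 : ∀ᵐ u ∂(MeasureTheory.volume.restrict (Set.Icc s s')), u ≠ s' := by
      refine ae_restrict_of_ae ?_
      rw [ae_iff]
      simp only [ne_eq, not_not, setOf_eq_eq_singleton]
      exact measure_singleton s'
    filter_upwards [h1, h2, h3, h4] with u hu1 hu2 hu3 hu4
    have huIoo : u ∈ Set.Ioo s s' := ⟨lt_of_le_of_ne hu2.1 (Ne.symm hu3), lt_of_le_of_ne hu2.2 hu4⟩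
    obtain ⟨hmu, hum₂⟩ := key u huIoo
    have hy : z u ∈ Set.Ioo c d := ⟨lt_of_le_of_lt hm hmu, lt_of_lt_of_le hum₂ hm₂⟩
    rw [Xset_left (hcd _ hy), Set.mem_singleton_iff] at hu1
    have hz0u : 0 ≤ z u := (hz01 u (hs0.trans huIoo.1.le)).1
    rw [hu1]; linarith
  have hdiff : z s' - z s = ∫ u in s..s', v u := sol_diff hint hrep hs0 hss'
  have hle : (0:ℝ) ≤ ∫ u in s..s', -v u :=
    intervalIntegral.integral_nonneg_of_ae_restrict hss' hv_le
  rw [intervalIntegral.integral_neg] at hle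
  have := hsS.2
  have := hs'S.2
  simp only [Set.mem_preimage, Set.mem_Iic, Set.mem_Ici] at *
  linarith

/-- The solution cannot cross downward through a region where `ubar uB < ubar uA`. -/
lemma barrier_down {c d m m₂ t₀ t₁ : ℝ}
    (hz01 : ∀ t, 0 ≤ t → z t ∈ Set.Icc (0:ℝ) 1)
    (hXv : ∀ᵐ t ∂(MeasureTheory.volume.restrict (Set.Ici (0:ℝ))), v t ∈ Xset uA uB (z t))
    (hint : ∀ t, 0 ≤ t → IntervalIntegrable v MeasureTheory.volume 0 t)
    (hrep : ∀ t, 0 ≤ t → z t = z 0 + ∫ s in (0:ℝ)..t, v s)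
    (hcd : ∀ y ∈ Set.Ioo c d, ubar uB y < ubar uA y)
    (hm₂ : c ≤ m₂) (hmm : m₂ < m) (hm : m ≤ d)
    (ht₀ : 0 ≤ t₀) (ht : t₀ ≤ t₁) (h0 : m ≤ z t₀) : m₂ ≤ z t₁ := by
  by_contra hcon
  push_neg at hcon
  have ht₁ : (0:ℝ) ≤ t₁ := ht₀.trans ht
  have hzc : ContinuousOn z (Set.Icc t₀ t₁) :=
    (sol_contOn hint hrep ht₁).mono (Set.Icc_subset_Icc ht₀ le_rfl)
  set S : Set ℝ := Set.Icc t₀ t₁ ∩ z ⁻¹' Set.Ici m with hS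
  have hScl : IsClosed S := hzc.preimage_isClosed_of_isClosed isClosed_Icc isClosed_Ici
  have hScpt : IsCompact S := isCompact_Icc.of_isClosed_subset hScl Set.inter_subset_left
  have hSne : S.Nonempty := ⟨t₀, ⟨le_rfl, ht⟩, h0⟩
  set s := sSup S with hs
  have hsS : s ∈ S := hScpt.sSup_mem hSne
  have hs0 : (0:ℝ) ≤ s := ht₀.trans hsS.1.1
  have hst₁ : s ≤ t₁ := hsS.1.2
  have hzc' : ContinuousOn z (Set.Icc s t₁) :=
    hzc.mono (Set.Icc_subset_Icc hsS.1.1 le_rfl)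
  set S' : Set ℝ := Set.Icc s t₁ ∩ z ⁻¹' Set.Iic m₂ with hS'
  have hS'cl : IsClosed S' := hzc'.preimage_isClosed_of_isClosed isClosed_Icc isClosed_Iic
  have hS'cpt : IsCompact S' := isCompact_Icc.of_isClosed_subset hS'cl Set.inter_subset_left
  have hS'ne : S'.Nonempty := ⟨t₁, ⟨hst₁, le_rfl⟩, hcon.le⟩
  set s' := sInf S' with hs'
  have hs'S : s' ∈ S' := hS'cpt.sInf_mem hS'ne
  have hss' : s ≤ s' := hs'S.1.1
  have key : ∀ t ∈ Set.Ioo s s', m₂ < z t ∧ z t < m := by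
    intro t htm
    constructor
    · by_contra h
      push_neg at h
      have htS' : t ∈ S' := ⟨⟨htm.1.le, htm.2.le.trans hs'S.1.2⟩, h⟩
      exact absurd (csInf_le hS'cpt.bddBelow htS') (not_le.mpr htm.2)
    · by_contra h
      push_neg at h
      have htS : t ∈ S := ⟨⟨hsS.1.1.trans htm.1.le, htm.2.le.trans hs'S.1.2⟩, h⟩
      exact absurd (le_csSup hScpt.bddAbove htS) (not_le.mpr htm.1)
  have hv_le : ∀ᵐ u ∂(MeasureTheory.volume.restrict (Set.Icc s s')), v u ≥ 0 := by
    have h1 : ∀ᵐ u ∂(MeasureTheory.volume.restrict (Set.Icc s s')),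
        v u ∈ Xset uA uB (z u) :=
      ae_restrict_of_ae_restrict_of_subset (fun x hx => hs0.trans hx.1) hXv
    have h2 : ∀ᵐ u ∂(MeasureTheory.volume.restrict (Set.Icc s s')), u ∈ Set.Icc s s' :=
      ae_restrict_mem measurableSet_Icc
    have h3 : ∀ᵐ u ∂(MeasureTheory.volume.restrict (Set.Icc s s')), u ≠ s := by
      refine ae_restrict_of_ae ?_
      rw [ae_iff]
      simp only [ne_eq, not_not, setOf_eq_eq_singleton]
      exact measure_singleton s
    have h4 : ∀ᵐ u ∂(MeasureTheory.volume.restrict (Set.Icc s s')), u ≠ s' := by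
      refine ae_restrict_of_ae ?_
      rw [ae_iff]
      simp only [ne_eq, not_not, setOf_eq_eq_singleton]
      exact measure_singleton s'
    filter_upwards [h1, h2, h3, h4] with u hu1 hu2 hu3 hu4
    have huIoo : u ∈ Set.Ioo s s' := ⟨lt_of_le_of_ne hu2.1 (Ne.symm hu3), lt_of_le_of_ne hu2.2 hu4⟩
    obtain ⟨hmu, hum⟩ := key u huIoo
    have hy : z u ∈ Set.Ioo c d := ⟨lt_of_le_of_lt hm₂ hmu, lt_of_lt_of_le hum hm⟩
    rw [Xset_right (hcd _ hy), Set.mem_singleton_iff] at hu1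
    have hz1u : z u ≤ 1 := (hz01 u (hs0.trans huIoo.1.le)).2
    rw [hu1]; linarith
  have hdiff : z s' - z s = ∫ u in s..s', v u := sol_diff hint hrep hs0 hss'
  have hle : (0:ℝ) ≤ ∫ u in s..s', v u :=
    intervalIntegral.integral_nonneg_of_ae_restrict hss' hv_le
  have := hsS.2
  have := hs'S.2
  simp only [Set.mem_preimage, Set.mem_Iic, Set.mem_Ici] at *
  linarith

end Barrier

section Reach
variable {p : ℕ} {uA uB : Fin p → Polynomial ℝ} {z v : ℝ → ℝ}

/-- In a region of leftward drift, the solution must eventually reach level `l`. -/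
lemma exists_low {c d l u' t₀ : ℝ}
    (hz01 : ∀ t, 0 ≤ t → z t ∈ Set.Icc (0:ℝ) 1)
    (hXv : ∀ᵐ t ∂(MeasureTheory.volume.restrict (Set.Ici (0:ℝ))), v t ∈ Xset uA uB (z t))
    (hint : ∀ t, 0 ≤ t → IntervalIntegrable v MeasureTheory.volume 0 t)
    (hrep : ∀ t, 0 ≤ t → z t = z 0 + ∫ s in (0:ℝ)..t, v s)
    (hcd : ∀ y ∈ Set.Ioo c d, ubar uA y < ubar uB y)
    (hl0 : 0 < l) (hlc : c ≤ l) (hu' : u' < d)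
    (ht₀ : 0 ≤ t₀) (hub : ∀ t, t₀ ≤ t → z t ≤ u') :
    ∃ t₁, t₀ ≤ t₁ ∧ z t₁ ≤ l := by
  by_contra hcon
  push_neg at hcon
  set T : ℝ := t₀ + (z t₀ + 1) / l with hT
  have hTt₀ : t₀ ≤ T := by
    have h1 : 0 ≤ z t₀ := (hz01 t₀ ht₀).1
    have h2 : 0 ≤ (z t₀ + 1) / l := by positivity
    rw [hT]; linarith
  have hvle : ∀ᵐ u ∂(MeasureTheory.volume.restrict (Set.Icc t₀ T)), v u ≤ -l := by
    have h1 : ∀ᵐ u ∂(MeasureTheory.volume.restrict (Set.Icc t₀ T)),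
        v u ∈ Xset uA uB (z u) :=
      ae_restrict_of_ae_restrict_of_subset (fun x hx => ht₀.trans hx.1) hXv
    have h2 : ∀ᵐ u ∂(MeasureTheory.volume.restrict (Set.Icc t₀ T)), u ∈ Set.Icc t₀ T :=
      ae_restrict_mem measurableSet_Icc
    filter_upwards [h1, h2] with u hu1 hu2
    have hlu : l < z u := hcon u hu2.1
    have hy : z u ∈ Set.Ioo c d := ⟨lt_of_le_of_lt hlc hlu, lt_of_le_of_lt (hub u hu2.1) hu'⟩
    rw [Xset_left (hcd _ hy), Set.mem_singleton_iff] at hu1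
    rw [hu1]; linarith
  have hdiff : z T - z t₀ = ∫ u in t₀..T, v u := sol_diff hint hrep ht₀ hTt₀
  have hmono : (∫ u in t₀..T, v u) ≤ ∫ _ in t₀..T, (-l : ℝ) :=
    intervalIntegral.integral_mono_ae_restrict hTt₀ (sol_subint hint ht₀ hTt₀)
      intervalIntegrable_const hvle
  rw [intervalIntegral.integral_const, smul_eq_mul] at hmono
  have hTsub : T - t₀ = (z t₀ + 1) / l := by rw [hT]; ring
  have hzT : 0 ≤ z T := (hz01 T (ht₀.trans hTt₀)).1
  rw [hTsub] at hmono
  have : (z t₀ + 1) / l * l = z t₀ + 1 := div_mul_cancel₀ _ (ne_of_gt hl0)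
  nlinarith [hmono, hdiff, hzT]

/-- In a region of rightward drift, the solution must eventually reach level `u'`. -/
lemma exists_high {c d l u' t₀ : ℝ}
    (hz01 : ∀ t, 0 ≤ t → z t ∈ Set.Icc (0:ℝ) 1)
    (hXv : ∀ᵐ t ∂(MeasureTheory.volume.restrict (Set.Ici (0:ℝ))), v t ∈ Xset uA uB (z t))
    (hint : ∀ t, 0 ≤ t → IntervalIntegrable v MeasureTheory.volume 0 t)
    (hrep : ∀ t, 0 ≤ t → z t = z 0 + ∫ s in (0:ℝ)..t, v s)
    (hcd : ∀ y ∈ Set.Ioo c d, ubar uB y < ubar uA y)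
    (hu1 : u' < 1) (hu'd : u' ≤ d) (hcl : c < l)
    (ht₀ : 0 ≤ t₀) (hlb : ∀ t, t₀ ≤ t → l ≤ z t) :
    ∃ t₁, t₀ ≤ t₁ ∧ u' ≤ z t₁ := by
  by_contra hcon
  push_neg at hcon
  set δ : ℝ := 1 - u' with hδ
  have hδ0 : 0 < δ := by simp [hδ]; linarith
  set T : ℝ := t₀ + 2 / δ with hT
  have hTt₀ : t₀ ≤ T := by
    have h2 : 0 ≤ 2 / δ := by positivity
    rw [hT]; linarith
  have hvge : ∀ᵐ u ∂(MeasureTheory.volume.restrict (Set.Icc t₀ T)), δ ≤ v u := by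
    have h1 : ∀ᵐ u ∂(MeasureTheory.volume.restrict (Set.Icc t₀ T)),
        v u ∈ Xset uA uB (z u) :=
      ae_restrict_of_ae_restrict_of_subset (fun x hx => ht₀.trans hx.1) hXv
    have h2 : ∀ᵐ u ∂(MeasureTheory.volume.restrict (Set.Icc t₀ T)), u ∈ Set.Icc t₀ T :=
      ae_restrict_mem measurableSet_Icc
    filter_upwards [h1, h2] with u hu1 hu2
    have hzu : z u < u' := hcon u hu2.1
    have hy : z u ∈ Set.Ioo c d :=
      ⟨lt_of_lt_of_le hcl (hlb u hu2.1), lt_of_lt_of_le hzu hu'd⟩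
    rw [Xset_right (hcd _ hy), Set.mem_singleton_iff] at hu1
    rw [hu1, hδ]; linarith
  have hdiff : z T - z t₀ = ∫ u in t₀..T, v u := sol_diff hint hrep ht₀ hTt₀
  have hmono : (∫ _ in t₀..T, (δ : ℝ)) ≤ ∫ u in t₀..T, v u :=
    intervalIntegral.integral_mono_ae_restrict hTt₀ intervalIntegrable_const
      (sol_subint hint ht₀ hTt₀) hvge
  rw [intervalIntegral.integral_const, smul_eq_mul] at hmono
  have hTsub : T - t₀ = 2 / δ := by rw [hT]; ring
  have hzT : z T ≤ 1 := (hz01 T (ht₀.trans hTt₀)).2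
  have hz0 : 0 ≤ z t₀ := (hz01 t₀ ht₀).1
  rw [hTsub] at hmono
  have : 2 / δ * δ = 2 := div_mul_cancel₀ _ (ne_of_gt hδ0)
  nlinarith [hmono, hdiff, hzT, hz0]

end Reach

section Conv
variable {p : ℕ} {uA uB : Fin p → Polynomial ℝ} {z v : ℝ → ℝ}

lemma tendsto_to_a {a q b t₀ : ℝ}
    (hz01 : ∀ t, 0 ≤ t → z t ∈ Set.Icc (0:ℝ) 1)
    (hXv : ∀ᵐ t ∂(MeasureTheory.volume.restrict (Set.Ici (0:ℝ))), v t ∈ Xset uA uB (z t))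
    (hint : ∀ t, 0 ≤ t → IntervalIntegrable v MeasureTheory.volume 0 t)
    (hrep : ∀ t, 0 ≤ t → z t = z 0 + ∫ s in (0:ℝ)..t, v s)
    (ha : 0 ≤ a) (haq : a < q) (hqb : q < b)
    (hleft : ∀ y ∈ Set.Ioo a q, ubar uA y < ubar uB y)
    (hA : (a = 0 ∧ ubar uA 0 < ubar uB 0) ∨
      ∃ a₀ < a, ∀ y ∈ Set.Ioo a₀ a, ubar uB y < ubar uA y)
    (hz0 : z 0 = q) (ht₀ : 0 ≤ t₀) (hlt : z t₀ < q) :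
    Filter.Tendsto z Filter.atTop (nhds a) := by
  -- upper barrier below q, valid for all t ≥ t₀
  set m₀ : ℝ := max a (z t₀) with hm₀
  have hm₀q : m₀ < q := max_lt haq hlt
  set d₂ : ℝ := (m₀ + q) / 2 with hd₂
  have hm₀d₂ : m₀ < d₂ := by rw [hd₂]; linarith
  have hd₂q : d₂ < q := by rw [hd₂]; linarith
  have hub : ∀ t, t₀ ≤ t → z t ≤ d₂ := fun t htt =>
    barrier_up hz01 hXv hint hrep hleft (le_max_left _ _) hm₀d₂ hd₂q.le ht₀ htt
      (le_max_right _ _)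
  rw [Metric.tendsto_atTop]
  intro ε hε
  set ε' : ℝ := min (ε / 2) ((q - a) / 2) with hε'
  have hε'0 : 0 < ε' := lt_min (by linarith) (by linarith)
  have hε'q : a + ε' < q := by
    have : ε' ≤ (q - a) / 2 := min_le_right _ _
    linarith
  have hε'ε : ε' < ε := lt_of_le_of_lt (min_le_left _ _) (by linarith)
  -- step 1 : reach a + ε'/2
  obtain ⟨t₁, ht₁t₀, ht₁le⟩ : ∃ t₁, t₀ ≤ t₁ ∧ z t₁ ≤ a + ε' / 2 :=
    exists_low hz01 hXv hint hrep hleft (by linarith) (by linarith) hd₂q ht₀ hub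
  have ht₁0 : (0:ℝ) ≤ t₁ := ht₀.trans ht₁t₀
  -- step 2 : stay below a + ε'
  have hstay : ∀ t, t₁ ≤ t → z t ≤ a + ε' := fun t htt =>
    barrier_up hz01 hXv hint hrep hleft (by linarith) (by linarith) (by linarith)
      ht₁0 htt ht₁le
  -- step 3 : lower bound
  have hlow : ∀ t, 0 ≤ t → a - ε' ≤ z t := by
    rcases hA with ⟨ha0, _⟩ | ⟨a₀, ha₀a, hout⟩
    · intro t htt
      have := (hz01 t htt).1
      rw [ha0]; linarith
    · intro t htt
      set ε'' : ℝ := min ε' ((a - a₀) / 2) with hε''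
      have hε''0 : 0 < ε'' := lt_min hε'0 (by linarith)
      have h1 : a₀ ≤ a - ε'' := by
        have : ε'' ≤ (a - a₀) / 2 := min_le_right _ _
        linarith
      have h2 : a - ε'' < a - ε'' / 2 := by linarith
      have h3 : a - ε'' / 2 ≤ a := by linarith
      have h4 : a - ε'' / 2 ≤ z 0 := by rw [hz0]; linarith
      have := barrier_down hz01 hXv hint hrep hout h1 h2 h3 le_rfl htt h4
      have h5 : ε'' ≤ ε' := min_le_left _ _
      linarith
  refine ⟨t₁, fun t htt => ?_⟩
  have h1 := hstay t htt
  have h2 := hlow t (ht₁0.trans htt)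
  rw [Real.dist_eq, abs_lt]
  constructor <;> linarith

lemma tendsto_to_b {a q b t₀ : ℝ}
    (hz01 : ∀ t, 0 ≤ t → z t ∈ Set.Icc (0:ℝ) 1)
    (hXv : ∀ᵐ t ∂(MeasureTheory.volume.restrict (Set.Ici (0:ℝ))), v t ∈ Xset uA uB (z t))
    (hint : ∀ t, 0 ≤ t → IntervalIntegrable v MeasureTheory.volume 0 t)
    (hrep : ∀ t, 0 ≤ t → z t = z 0 + ∫ s in (0:ℝ)..t, v s)
    (hb : b ≤ 1) (haq : a < q) (hqb : q < b)
    (hright : ∀ y ∈ Set.Ioo q b, ubar uB y < ubar uA y)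
    (hB : (b = 1 ∧ ubar uB 1 < ubar uA 1) ∨
      ∃ b₀ > b, ∀ y ∈ Set.Ioo b b₀, ubar uA y < ubar uB y)
    (hz0 : z 0 = q) (ht₀ : 0 ≤ t₀) (hgt : q < z t₀) :
    Filter.Tendsto z Filter.atTop (nhds b) := by
  set m₀ : ℝ := min b (z t₀) with hm₀
  have hqm₀ : q < m₀ := lt_min hqb hgt
  set d₂ : ℝ := (q + m₀) / 2 with hd₂
  have hd₂m₀ : d₂ < m₀ := by rw [hd₂]; linarith
  have hqd₂ : q < d₂ := by rw [hd₂]; linarith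
  have hlb : ∀ t, t₀ ≤ t → d₂ ≤ z t := fun t htt =>
    barrier_down hz01 hXv hint hrep hright hqd₂.le hd₂m₀ (min_le_left _ _) ht₀ htt
      (min_le_right _ _)
  rw [Metric.tendsto_atTop]
  intro ε hε
  set ε' : ℝ := min (ε / 2) ((b - q) / 2) with hε'
  have hε'0 : 0 < ε' := lt_min (by linarith) (by linarith)
  have hε'q : q < b - ε' := by
    have : ε' ≤ (b - q) / 2 := min_le_right _ _
    linarith
  have hε'ε : ε' < ε := lt_of_le_of_lt (min_le_left _ _) (by linarith)
  obtain ⟨t₁, ht₁t₀, ht₁le⟩ : ∃ t₁, t₀ ≤ t₁ ∧ b - ε' / 2 ≤ z t₁ :=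
    exists_high hz01 hXv hint hrep hright (by linarith) (by linarith) hqd₂ ht₀ hlb
  have ht₁0 : (0:ℝ) ≤ t₁ := ht₀.trans ht₁t₀
  have hstay : ∀ t, t₁ ≤ t → b - ε' ≤ z t := fun t htt =>
    barrier_down hz01 hXv hint hrep hright (by linarith) (by linarith) (by linarith)
      ht₁0 htt ht₁le
  have hhigh : ∀ t, 0 ≤ t → z t ≤ b + ε' := by
    rcases hB with ⟨hb1, _⟩ | ⟨b₀, hb₀b, hout⟩
    · intro t htt
      have := (hz01 t htt).2
      rw [hb1]; linarith
    · intro t htt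
      set ε'' : ℝ := min ε' ((b₀ - b) / 2) with hε''
      have hε''0 : 0 < ε'' := lt_min hε'0 (by linarith)
      have h1 : b + ε'' ≤ b₀ := by
        have : ε'' ≤ (b₀ - b) / 2 := min_le_right _ _
        linarith
      have h2 : b + ε'' / 2 < b + ε'' := by linarith
      have h3 : b ≤ b + ε'' / 2 := by linarith
      have h4 : z 0 ≤ b + ε'' / 2 := by rw [hz0]; linarith
      have := barrier_up hz01 hXv hint hrep hout h3 h2 h1 le_rfl htt h4
      have h5 : ε'' ≤ ε' := min_le_left _ _
      linarith
  refine ⟨t₁, fun t htt => ?_⟩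
  have h1 := hstay t htt
  have h2 := hhigh t (ht₁0.trans htt)
  rw [Real.dist_eq, abs_lt]
  constructor <;> linarith

end Conv


section Constr
variable {p : ℕ} {uA uB : Fin p → Polynomial ℝ}

lemma hasDeriv_rexp (r s : ℝ) :
    HasDerivAt (fun s : ℝ => r * Real.exp (-s)) (-(r * Real.exp (-s))) s := by
  have h1 : HasDerivAt (fun s : ℝ => -s) (-1) s := (hasDerivAt_id s).neg
  have h2 := (Real.hasDerivAt_exp (-s)).comp s h1
  have h3 := h2.const_mul r
  exact h3.congr_deriv (by ring)

lemma integral_rexp (r t : ℝ) :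
    (∫ u in (0:ℝ)..t, -(r * Real.exp (-u))) = r * Real.exp (-t) - r := by
  have h := intervalIntegral.integral_eq_sub_of_hasDerivAt
    (f := fun s : ℝ => r * Real.exp (-s)) (f' := fun s : ℝ => -(r * Real.exp (-s)))
    (a := 0) (b := t) (fun x _ => hasDeriv_rexp r x)
    (Continuous.intervalIntegrable (by continuity) _ _)
  rw [h]
  simp [Real.exp_zero]

lemma vint_indicator {T t : ℝ} (g : ℝ → ℝ) (hg : Continuous g) (ht : 0 ≤ t) :
    IntervalIntegrable (fun s => if s < T then g s else 0) MeasureTheory.volume 0 t := by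
  have hv_eq : (fun s => if s < T then g s else 0)
      = (Set.Iio T).indicator g := by
    funext s
    by_cases h : s < T <;> simp [Set.indicator_apply, Set.mem_Iio, h]
  rw [hv_eq, intervalIntegrable_iff_integrableOn_Icc_of_le ht]
  exact (hg.integrableOn_Icc).indicator measurableSet_Iio

end Constr

section Sols
variable {p : ℕ} {uA uB : Fin p → Polynomial ℝ}

lemma sol_to_q (hp : 0 < p) {a q b : ℝ} (ha : 0 ≤ a) (hb : b ≤ 1)
    (haq : a < q) (hqb : q < b)
    (hleft : ∀ y ∈ Set.Ioo a q, ubar uA y < ubar uB y)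
    (hright : ∀ y ∈ Set.Ioo q b, ubar uB y < ubar uA y) :
    ∃ z : ℝ → ℝ, IsAbsSol uA uB z ∧ z 0 = q ∧
      Filter.Tendsto z Filter.atTop (nhds q) := by
  have heq : ubar uA q = ubar uB q :=
    le_antisymm
      (ubar_le_right hp uA uB haq (fun y hy => (hleft y hy).le))
      (ubar_le_left hp uB uA hqb (fun y hy => (hright y hy).le))
  have hq0 : 0 ≤ q := ha.trans haq.le
  have hq1 : q ≤ 1 := hqb.le.trans hb
  refine ⟨fun _ => q, ⟨fun t _ => ⟨hq0, hq1⟩, fun _ => 0, ?_, ?_, ?_⟩, rfl, tendsto_const_nhds⟩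
  · refine Filter.Eventually.of_forall (fun t => ?_)
    rw [Xset_mid heq]
    simp only [Set.mem_Icc]
    constructor <;> linarith
  · exact fun t _ => intervalIntegrable_const
  · intro t _
    simp

set_option maxHeartbeats 1000000 in
lemma sol_to_a (hp : 0 < p) {a q b : ℝ} (ha : 0 ≤ a) (hb : b ≤ 1)
    (haq : a < q) (hqb : q < b)
    (hleft : ∀ y ∈ Set.Ioo a q, ubar uA y < ubar uB y)
    (hright : ∀ y ∈ Set.Ioo q b, ubar uB y < ubar uA y)
    (hA : (a = 0 ∧ ubar uA 0 < ubar uB 0) ∨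
      ∃ a₀ < a, ∀ y ∈ Set.Ioo a₀ a, ubar uB y < ubar uA y) :
    ∃ z : ℝ → ℝ, IsAbsSol uA uB z ∧ z 0 = q ∧
      Filter.Tendsto z Filter.atTop (nhds a) := by
  have heq : ubar uA q = ubar uB q :=
    le_antisymm
      (ubar_le_right hp uA uB haq (fun y hy => (hleft y hy).le))
      (ubar_le_left hp uB uA hqb (fun y hy => (hright y hy).le))
  have hq1 : q ≤ 1 := hqb.le.trans hb
  have hq0 : 0 ≤ q := ha.trans haq.le
  by_cases ha0 : a = 0
  · -- pure exponential decay to 0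
    subst ha0
    have hq0' : 0 < q := haq
    refine ⟨fun t => q * Real.exp (-t), ⟨?_, fun s => -(q * Real.exp (-s)), ?_, ?_, ?_⟩,
      by simp, ?_⟩
    · intro t ht
      simp only [Set.mem_Icc]
      have h1 : Real.exp (-t) ≤ 1 := Real.exp_le_one_iff.mpr (by linarith)
      have h2 : 0 < Real.exp (-t) := Real.exp_pos _
      constructor
      · positivity
      · nlinarith
    · rw [ae_restrict_iff' measurableSet_Ici]
      refine Filter.Eventually.of_forall (fun t ht => ?_)
      rcases eq_or_lt_of_le (Set.mem_Ici.mp ht) with h0 | h0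
      · rw [← h0]
        simp only [neg_zero, Real.exp_zero, mul_one]
        rw [Xset_mid heq]
        simp only [Set.mem_Icc]
        constructor <;> linarith
      · have h1 : Real.exp (-t) < 1 := Real.exp_lt_one_iff.mpr (by linarith)
        have h2 : q * Real.exp (-t) ∈ Set.Ioo (0:ℝ) q := ⟨by positivity, by nlinarith⟩
        rw [Xset_left (hleft _ h2)]
        rfl
    · exact fun t _ => Continuous.intervalIntegrable (by continuity) _ _
    · intro t _
      rw [integral_rexp]
      simp [Real.exp_zero]
    · have h := Real.tendsto_exp_neg_atTop_nhds_zero.const_mul q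
      simpa using h
  · -- a > 0 : exponential decay until hitting a, then rest
    have h0a : 0 < a := lt_of_le_of_ne ha (Ne.symm ha0)
    rcases hA with ⟨h, _⟩ | ⟨a₀, ha₀a, hout⟩
    · exact absurd h ha0
    have heqa : ubar uA a = ubar uB a :=
      le_antisymm
        (ubar_le_left hp uA uB haq (fun y hy => (hleft y hy).le))
        (ubar_le_right hp uB uA ha₀a (fun y hy => (hout y hy).le))
    set T : ℝ := Real.log (q / a) with hTdef
    have hqa1 : 1 < q / a := (one_lt_div h0a).mpr haq
    have hT0 : 0 < T := Real.log_pos hqa1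
    have hqT : q * Real.exp (-T) = a := by
      have hqne : q ≠ 0 := ne_of_gt (h0a.trans haq)
      rw [hTdef, Real.exp_neg, Real.exp_log (div_pos (h0a.trans haq) h0a), inv_div, mul_div_assoc',
        mul_comm q a, mul_div_assoc, div_self hqne, mul_one]
    set z : ℝ → ℝ := fun t => max a (q * Real.exp (-t)) with hzdef
    set v : ℝ → ℝ := fun s => if s < T then -(q * Real.exp (-s)) else 0 with hvdef
    have hz_le : ∀ t, t ≤ T → z t = q * Real.exp (-t) := by
      intro t htT
      apply max_eq_right
      rw [← hqT]
      have := Real.exp_le_exp.mpr (neg_le_neg htT)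
      nlinarith
    have hz_ge : ∀ t, T ≤ t → z t = a := by
      intro t htT
      apply max_eq_left
      rw [← hqT]
      have := Real.exp_le_exp.mpr (neg_le_neg htT)
      nlinarith
    have hz0 : z 0 = q := by
      rw [hzdef]; simp only [neg_zero, Real.exp_zero, mul_one]
      exact max_eq_right haq.le
    have hintv : ∀ t, 0 ≤ t → IntervalIntegrable v MeasureTheory.volume 0 t :=
      fun t ht => vint_indicator _ (by continuity) ht
    have hrepT : ∀ t, 0 ≤ t → t ≤ T → (∫ s in (0:ℝ)..t, v s) = q * Real.exp (-t) - q := by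
      intro t ht htT
      have hne : ∀ᵐ x : ℝ ∂MeasureTheory.volume, x ≠ T := by
        rw [ae_iff]
        simp only [ne_eq, not_not, Set.setOf_eq_eq_singleton]
        exact measure_singleton T
      have hcong : (∫ s in (0:ℝ)..t, v s) = ∫ s in (0:ℝ)..t, -(q * Real.exp (-s)) := by
        apply intervalIntegral.integral_congr_ae
        filter_upwards [hne] with x hx hxmem
        rw [Set.uIoc_of_le ht] at hxmem
        have : x < T := lt_of_le_of_ne (hxmem.2.trans htT) hx
        rw [hvdef]; simp [this]
      rw [hcong, integral_rexp]
    clear_value T z v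
    refine ⟨z, ⟨?_, v, ?_, hintv, ?_⟩, hz0, ?_⟩
    · intro t ht
      rw [hzdef]
      simp only [Set.mem_Icc]
      constructor
      · exact ha.trans (le_max_left _ _)
      · have h1 : Real.exp (-t) ≤ 1 := Real.exp_le_one_iff.mpr (by linarith)
        have h2 : q * Real.exp (-t) ≤ q := by nlinarith [Real.exp_pos (-t)]
        exact max_le (haq.le.trans hq1) (h2.trans hq1)
    · rw [ae_restrict_iff' measurableSet_Ici]
      refine Filter.Eventually.of_forall (fun t ht => ?_)
      replace ht : (0:ℝ) ≤ t := ht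
      by_cases htT : T ≤ t
      · rw [hz_ge t htT, Xset_mid heqa]
        have hvt : v t = 0 := by rw [hvdef]; simp [not_lt.mpr htT]
        rw [hvt]
        simp only [Set.mem_Icc]
        constructor <;> linarith
      · push_neg at htT
        rw [hz_le t htT.le]
        have hvt : v t = -(q * Real.exp (-t)) := by rw [hvdef]; simp [htT]
        rcases eq_or_lt_of_le ht with h0 | h0
        · rw [← h0] at hvt ⊢
          simp only [neg_zero, Real.exp_zero, mul_one] at hvt ⊢
          rw [Xset_mid heq, hvt]
          simp only [Set.mem_Icc]
          constructor <;> linarith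
        · have h1 : Real.exp (-t) < 1 := Real.exp_lt_one_iff.mpr (by linarith)
          have h2 : Real.exp (-T) < Real.exp (-t) := Real.exp_lt_exp.mpr (by linarith)
          have h3 : q * Real.exp (-t) ∈ Set.Ioo a q := by
            constructor
            · rw [← hqT]; nlinarith
            · nlinarith
          rw [Xset_left (hleft _ h3), hvt]
          rfl
    · intro t ht
      rw [hz0]
      by_cases htT : t ≤ T
      · rw [hrepT t ht htT, hz_le t htT]; ring
      · push_neg at htT
        have hsplit := intervalIntegral.integral_add_adjacent_intervals
          (hintv T hT0.le) (sol_subint hintv hT0.le htT.le)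
        have h1 : (∫ s in (0:ℝ)..T, v s) = a - q := by
          rw [hrepT T hT0.le le_rfl, hqT]
        have h2 : (∫ s in T..t, v s) = 0 := by
          have : (∫ s in T..t, v s) = ∫ s in T..t, (0:ℝ) := by
            apply intervalIntegral.integral_congr
            intro x hx
            rw [Set.uIcc_of_le htT.le] at hx
            rw [hvdef]; simp [not_lt.mpr hx.1]
          rw [this, intervalIntegral.integral_zero]
        rw [← hsplit, h1, h2, hz_ge t htT.le]; ring
    · apply Filter.Tendsto.congr' _ (tendsto_const_nhds (α := ℝ))
      filter_upwards [Filter.eventually_atTop.mpr ⟨T, fun t ht => (hz_ge t ht).symm⟩] with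
        t ht using ht

end Sols

section SolB
variable {p : ℕ} {uA uB : Fin p → Polynomial ℝ}

lemma integral_rexp' (r t : ℝ) :
    (∫ u in (0:ℝ)..t, r * Real.exp (-u)) = r - r * Real.exp (-t) := by
  have h := integral_rexp r t
  have h2 : (∫ u in (0:ℝ)..t, r * Real.exp (-u))
      = -(∫ u in (0:ℝ)..t, -(r * Real.exp (-u))) := by
    rw [intervalIntegral.integral_neg, neg_neg]
  rw [h2, h]; ring

set_option maxHeartbeats 1000000 in
lemma sol_to_b (hp : 0 < p) {a q b : ℝ} (ha : 0 ≤ a) (hb : b ≤ 1)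
    (haq : a < q) (hqb : q < b)
    (hleft : ∀ y ∈ Set.Ioo a q, ubar uA y < ubar uB y)
    (hright : ∀ y ∈ Set.Ioo q b, ubar uB y < ubar uA y)
    (hB : (b = 1 ∧ ubar uB 1 < ubar uA 1) ∨
      ∃ b₀ > b, ∀ y ∈ Set.Ioo b b₀, ubar uA y < ubar uB y) :
    ∃ z : ℝ → ℝ, IsAbsSol uA uB z ∧ z 0 = q ∧
      Filter.Tendsto z Filter.atTop (nhds b) := by
  have heq : ubar uA q = ubar uB q :=
    le_antisymm
      (ubar_le_right hp uA uB haq (fun y hy => (hleft y hy).le))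
      (ubar_le_left hp uB uA hqb (fun y hy => (hright y hy).le))
  have hq1 : q ≤ 1 := hqb.le.trans hb
  have hq0 : 0 ≤ q := ha.trans haq.le
  by_cases hb1 : b = 1
  · -- pure exponential approach to 1
    subst hb1
    have hq1' : q < 1 := hqb
    refine ⟨fun t => 1 - (1 - q) * Real.exp (-t),
      ⟨?_, fun s => (1 - q) * Real.exp (-s), ?_, ?_, ?_⟩, by simp, ?_⟩
    · intro t ht
      simp only [Set.mem_Icc]
      have h1 : Real.exp (-t) ≤ 1 := Real.exp_le_one_iff.mpr (by linarith)
      have h2 : 0 < Real.exp (-t) := Real.exp_pos _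
      constructor
      · nlinarith
      · nlinarith
    · rw [ae_restrict_iff' measurableSet_Ici]
      refine Filter.Eventually.of_forall (fun t ht => ?_)
      rcases eq_or_lt_of_le (Set.mem_Ici.mp ht) with h0 | h0
      · rw [← h0]
        simp only [neg_zero, Real.exp_zero, mul_one]
        have : (1:ℝ) - (1 - q) = q := by ring
        rw [this, Xset_mid heq]
        simp only [Set.mem_Icc]
        constructor <;> linarith
      · have h1 : Real.exp (-t) < 1 := Real.exp_lt_one_iff.mpr (by linarith)
        have h2 : 0 < Real.exp (-t) := Real.exp_pos _
        have h3 : 1 - (1 - q) * Real.exp (-t) ∈ Set.Ioo q 1 := by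
          constructor <;> nlinarith
        rw [Xset_right (hright _ h3), Set.mem_singleton_iff]
        ring
    · exact fun t _ => Continuous.intervalIntegrable (by continuity) _ _
    · intro t _
      rw [integral_rexp']
      simp [Real.exp_zero]; ring
    · have h := Real.tendsto_exp_neg_atTop_nhds_zero.const_mul (1 - q)
      have h2 := (tendsto_const_nhds (x := (1:ℝ)) (f := Filter.atTop)).sub h
      simpa using h2
  · -- b < 1
    have hbb : b < 1 := lt_of_le_of_ne hb hb1
    rcases hB with ⟨h, _⟩ | ⟨b₀, hb₀b, hout⟩
    · exact absurd h hb1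
    have heqb : ubar uA b = ubar uB b :=
      le_antisymm
        (ubar_le_left hp uA uB hb₀b (fun y hy => (hout y hy).le))
        (ubar_le_right hp uB uA hqb (fun y hy => (hright y hy).le))
    have hr0 : 0 < 1 - q := by linarith
    have hs0 : 0 < 1 - b := by linarith
    set T : ℝ := Real.log ((1 - q) / (1 - b)) with hTdef
    have hqa1 : 1 < (1 - q) / (1 - b) := (one_lt_div hs0).mpr (by linarith)
    have hT0 : 0 < T := Real.log_pos hqa1
    have hqT : (1 - q) * Real.exp (-T) = 1 - b := by
      have hqne : (1:ℝ) - q ≠ 0 := ne_of_gt hr0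
      rw [hTdef, Real.exp_neg, Real.exp_log (div_pos hr0 hs0), inv_div, mul_div_assoc',
        mul_comm (1 - q) (1 - b), mul_div_assoc, div_self hqne, mul_one]
    set z : ℝ → ℝ := fun t => min b (1 - (1 - q) * Real.exp (-t)) with hzdef
    set v : ℝ → ℝ := fun s => if s < T then (1 - q) * Real.exp (-s) else 0 with hvdef
    have hz_le : ∀ t, t ≤ T → z t = 1 - (1 - q) * Real.exp (-t) := by
      intro t htT
      apply min_eq_right
      have := Real.exp_le_exp.mpr (neg_le_neg htT)
      nlinarith
    have hz_ge : ∀ t, T ≤ t → z t = b := by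
      intro t htT
      apply min_eq_left
      have := Real.exp_le_exp.mpr (neg_le_neg htT)
      nlinarith
    have hz0 : z 0 = q := by
      rw [hzdef]; simp only [neg_zero, Real.exp_zero, mul_one]
      have : (1:ℝ) - (1 - q) = q := by ring
      rw [this]
      exact min_eq_right hqb.le
    have hintv : ∀ t, 0 ≤ t → IntervalIntegrable v MeasureTheory.volume 0 t :=
      fun t ht => vint_indicator _ (by continuity) ht
    have hrepT : ∀ t, 0 ≤ t → t ≤ T →
        (∫ s in (0:ℝ)..t, v s) = (1 - q) - (1 - q) * Real.exp (-t) := by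
      intro t ht htT
      have hne : ∀ᵐ x : ℝ ∂MeasureTheory.volume, x ≠ T := by
        rw [ae_iff]
        simp only [ne_eq, not_not, Set.setOf_eq_eq_singleton]
        exact measure_singleton T
      have hcong : (∫ s in (0:ℝ)..t, v s) = ∫ s in (0:ℝ)..t, (1 - q) * Real.exp (-s) := by
        apply intervalIntegral.integral_congr_ae
        filter_upwards [hne] with x hx hxmem
        rw [Set.uIoc_of_le ht] at hxmem
        have : x < T := lt_of_le_of_ne (hxmem.2.trans htT) hx
        rw [hvdef]; simp [this]
      rw [hcong, integral_rexp']
    clear_value T z v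
    refine ⟨z, ⟨?_, v, ?_, hintv, ?_⟩, hz0, ?_⟩
    · intro t ht
      rw [hzdef]
      simp only [Set.mem_Icc]
      have h1 : Real.exp (-t) ≤ 1 := Real.exp_le_one_iff.mpr (by linarith)
      have h2 : 0 < Real.exp (-t) := Real.exp_pos _
      constructor
      · have : q ≤ 1 - (1 - q) * Real.exp (-t) := by nlinarith
        have hbmin : q ≤ min b (1 - (1 - q) * Real.exp (-t)) := le_min hqb.le this
        linarith
      · exact (min_le_left _ _).trans hb
    · rw [ae_restrict_iff' measurableSet_Ici]
      refine Filter.Eventually.of_forall (fun t ht => ?_)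
      replace ht : (0:ℝ) ≤ t := ht
      by_cases htT : T ≤ t
      · rw [hz_ge t htT, Xset_mid heqb]
        have hvt : v t = 0 := by rw [hvdef]; simp [not_lt.mpr htT]
        rw [hvt]
        simp only [Set.mem_Icc]
        constructor <;> linarith
      · push_neg at htT
        rw [hz_le t htT.le]
        have hvt : v t = (1 - q) * Real.exp (-t) := by rw [hvdef]; simp [htT]
        rcases eq_or_lt_of_le ht with h0 | h0
        · rw [← h0] at hvt ⊢
          simp only [neg_zero, Real.exp_zero, mul_one] at hvt ⊢
          have he : (1:ℝ) - (1 - q) = q := by ring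
          rw [he, Xset_mid heq, hvt]
          simp only [Set.mem_Icc]
          constructor <;> linarith
        · have h1 : Real.exp (-t) < 1 := Real.exp_lt_one_iff.mpr (by linarith)
          have h2 : Real.exp (-T) < Real.exp (-t) := Real.exp_lt_exp.mpr (by linarith)
          have h3 : 1 - (1 - q) * Real.exp (-t) ∈ Set.Ioo q b := by
            constructor
            · nlinarith
            · nlinarith
          rw [Xset_right (hright _ h3), hvt, Set.mem_singleton_iff]
          ring
    · intro t ht
      rw [hz0]
      by_cases htT : t ≤ T
      · rw [hrepT t ht htT, hz_le t htT]; ring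
      · push_neg at htT
        have hsplit := intervalIntegral.integral_add_adjacent_intervals
          (hintv T hT0.le) (sol_subint hintv hT0.le htT.le)
        have h1 : (∫ s in (0:ℝ)..T, v s) = b - q := by
          rw [hrepT T hT0.le le_rfl, hqT]; ring
        have h2 : (∫ s in T..t, v s) = 0 := by
          have : (∫ s in T..t, v s) = ∫ s in T..t, (0:ℝ) := by
            apply intervalIntegral.integral_congr
            intro x hx
            rw [Set.uIcc_of_le htT.le] at hx
            rw [hvdef]; simp [not_lt.mpr hx.1]
          rw [this, intervalIntegral.integral_zero]
        rw [← hsplit, h1, h2, hz_ge t htT.le]; ring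
    · apply Filter.Tendsto.congr' _ (tendsto_const_nhds (α := ℝ))
      filter_upwards [Filter.eventually_atTop.mpr ⟨T, fun t ht => (hz_ge t ht).symm⟩] with
        t ht using ht

end SolB

theorem abstract_limit_set_of_nonattracting_point
    {p : ℕ} (hp : 0 < p) (uA uB : Fin p → Polynomial ℝ)
    (a q b : ℝ) (ha : 0 ≤ a) (hb : b ≤ 1) (haq : a < q) (hqb : q < b)
    (hleft : ∀ y ∈ Set.Ioo a q, ubar uA y < ubar uB y)
    (hright : ∀ y ∈ Set.Ioo q b, ubar uB y < ubar uA y)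
    (hA : (a = 0 ∧ ubar uA 0 < ubar uB 0) ∨
      ∃ a₀ < a, ∀ y ∈ Set.Ioo a₀ a, ubar uB y < ubar uA y)
    (hB : (b = 1 ∧ ubar uB 1 < ubar uA 1) ∨
      ∃ b₀ > b, ∀ y ∈ Set.Ioo b b₀, ubar uA y < ubar uB y) :
    (∀ z : ℝ → ℝ, IsAbsSol uA uB z → z 0 = q →
      Filter.Tendsto z Filter.atTop (nhds a) ∨
      Filter.Tendsto z Filter.atTop (nhds q) ∨
      Filter.Tendsto z Filter.atTop (nhds b)) ∧
    (∀ l ∈ ({a, q, b} : Set ℝ), ∃ z : ℝ → ℝ,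
      IsAbsSol uA uB z ∧ z 0 = q ∧ Filter.Tendsto z Filter.atTop (nhds l)) ∧
    (⋃ z ∈ {z : ℝ → ℝ | IsAbsSol uA uB z ∧ z 0 = q},
        ⋂ t ∈ Set.Ici (0:ℝ), closure (z '' Set.Ici t)) = {a, q, b} := by
  have part1 : ∀ z : ℝ → ℝ, IsAbsSol uA uB z → z 0 = q →
      Filter.Tendsto z Filter.atTop (nhds a) ∨
      Filter.Tendsto z Filter.atTop (nhds q) ∨
      Filter.Tendsto z Filter.atTop (nhds b) := by
    rintro z ⟨hz01, v, hXv, hint, hrep⟩ hz0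
    by_cases hconst : ∀ t, 0 ≤ t → z t = q
    · right; left
      apply Filter.Tendsto.congr' _ (tendsto_const_nhds (α := ℝ))
      filter_upwards [Filter.eventually_ge_atTop (0:ℝ)] with t ht
        using (hconst t ht).symm
    · push_neg at hconst
      obtain ⟨t₀, ht₀, hne⟩ := hconst
      rcases lt_or_gt_of_ne hne with hlt | hgt
      · exact Or.inl (tendsto_to_a hz01 hXv hint hrep ha haq hqb hleft hA hz0 ht₀ hlt)
      · exact Or.inr (Or.inr
          (tendsto_to_b hz01 hXv hint hrep hb haq hqb hright hB hz0 ht₀ hgt))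
  have part2 : ∀ l ∈ ({a, q, b} : Set ℝ), ∃ z : ℝ → ℝ,
      IsAbsSol uA uB z ∧ z 0 = q ∧ Filter.Tendsto z Filter.atTop (nhds l) := by
    intro l hl
    simp only [Set.mem_insert_iff, Set.mem_singleton_iff] at hl
    rcases hl with rfl | rfl | rfl
    · exact sol_to_a hp ha hb haq hqb hleft hright hA
    · exact sol_to_q hp ha hb haq hqb hleft hright
    · exact sol_to_b hp ha hb haq hqb hleft hright hB
  refine ⟨part1, part2, ?_⟩
  apply Set.Subset.antisymm
  · rintro x hx
    simp only [Set.mem_iUnion, Set.mem_setOf_eq] at hx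
    obtain ⟨z, ⟨hsol, hz0⟩, hx⟩ := hx
    have hlim : ∃ l ∈ ({a, q, b} : Set ℝ), Filter.Tendsto z Filter.atTop (nhds l) := by
      rcases part1 z hsol hz0 with h | h | h
      · exact ⟨a, Or.inl rfl, h⟩
      · exact ⟨q, Or.inr (Or.inl rfl), h⟩
      · exact ⟨b, Or.inr (Or.inr rfl), h⟩
    obtain ⟨l, hlmem, htend⟩ := hlim
    have hxl : x = l := by
      have hd : ∀ ε : ℝ, 0 < ε → dist x l ≤ ε := by
        intro ε hε
        obtain ⟨T, hT⟩ := Metric.tendsto_atTop.mp htend ε hε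
        have hx' : x ∈ closure (z '' Set.Ici (max T 0)) :=
          Set.mem_iInter₂.mp hx (max T 0) (Set.mem_Ici.mpr (le_max_right _ _))
        have hsub : z '' Set.Ici (max T 0) ⊆ Metric.closedBall l ε := by
          rintro y ⟨s, hs, rfl⟩
          exact Metric.mem_closedBall.mpr (hT s ((le_max_left _ _).trans hs)).le
        have := closure_minimal hsub Metric.isClosed_closedBall hx'
        exact Metric.mem_closedBall.mp this
      by_contra hne
      have h0 : 0 < dist x l := dist_pos.mpr hne
      have := hd (dist x l / 2) (by linarith)
      linarith
    rw [hxl]; exact hlmem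
  · intro l hl
    obtain ⟨z, hsol, hz0, htend⟩ := part2 l hl
    simp only [Set.mem_iUnion, Set.mem_setOf_eq]
    refine ⟨z, ⟨hsol, hz0⟩, ?_⟩
    apply Set.mem_iInter₂.mpr
    intro t _
    apply mem_closure_of_tendsto htend
    filter_upwards [Filter.eventually_ge_atTop t] with s hs using Set.mem_image_of_mem z hs
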